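/- Let E = EuclideanSpace ℝ (Fin n). Let ξ : E → ℝ be continuous with ξ(v) ≥ a for all v ∈ E, for some constant a > 0, and let κ > 0 be a constant. Suppose ε : ℝ → E is differentiable on [0,∞) and satisfies the AZTND error dynamics ε'(t) = -ξ(ε(t)) • ε(t) - κ • ∫₀ᵗ ε(s) ds for all t ≥ 0. Then ε(t) tends to 0 as t → ∞. -/

import Mathlib

open MeasureTheory intervalIntegral Filter RealInnerProductSpace

/-- **Theorem 1 (AZTND global convergence, vector case with constant feedback
coefficient).** If `ξ : EuclideanSpace ℝ (Fin n) → ℝ` is continuous and bounded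
below by a constant `a > 0`, `κ > 0`, and `ε : ℝ → EuclideanSpace ℝ (Fin n)`
is differentiable on `[0, ∞)` satisfying the AZTND error dynamics
`ε'(t) = -ξ(ε(t)) • ε(t) - κ • ∫₀ᵗ ε(s) ds` for all `t ≥ 0`, then
`ε(t) → 0` as `t → ∞`. -/
theorem aztnd_global_convergence_vector
    (n : ℕ) (a : ℝ) (ha : 0 < a)
    (ξ : EuclideanSpace ℝ (Fin n) → ℝ) (hξc : Continuous ξ)
    (hξa : ∀ v : EuclideanSpace ℝ (Fin n), a ≤ ξ v)
    (κ : ℝ) (hκ : 0 < κ)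
    (ε : ℝ → EuclideanSpace ℝ (Fin n))
    (hdyn : ∀ t : ℝ, 0 ≤ t →
      HasDerivAt ε (-(ξ (ε t)) • ε t - κ • ∫ s in (0:ℝ)..t, ε s) t) :
    Tendsto ε atTop (nhds 0) := by
  classical
  set y : ℝ → EuclideanSpace ℝ (Fin n) := fun t => ∫ s in (0:ℝ)..t, ε s with hydef
  -- basic continuity / integrability
  have hεc : ContinuousOn ε (Set.Ici 0) := fun t ht =>
    (hdyn t ht).continuousAt.continuousWithinAt
  have hsub : ∀ {u v : ℝ}, 0 ≤ u → 0 ≤ v → Set.uIcc u v ⊆ Set.Ici 0 := by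
    intro u v hu hv s hs
    exact le_trans (le_min hu hv) hs.1
  have hεint : ∀ {u v : ℝ}, 0 ≤ u → 0 ≤ v → IntervalIntegrable ε volume u v := fun hu hv =>
    (hεc.mono (hsub hu hv)).intervalIntegrable
  -- derivative of the primitive y
  have hyd : ∀ t : ℝ, 0 < t → HasDerivAt y (ε t) t := by
    intro t ht
    refine integral_hasDerivAt_right (hεint le_rfl ht.le)
      ⟨Set.Ici 0, Ici_mem_nhds ht, hεc.aestronglyMeasurable measurableSet_Ici⟩
      ((hεc t ht.le).continuousAt (Ici_mem_nhds ht))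
  have hyc : ∀ {T : ℝ}, 0 ≤ T → ContinuousOn y (Set.Icc 0 T) := by
    intro T hT
    have h : ContinuousOn y (Set.uIcc 0 T) :=
      continuousOn_primitive_interval' (hεint le_rfl hT) Set.left_mem_uIcc
    rwa [Set.uIcc_of_le hT] at h
  -- Lyapunov function
  set g : ℝ → ℝ := fun u => ⟪ε u, ε u⟫ with hgdef
  set V : ℝ → ℝ := fun u => ⟪ε u, ε u⟫ + κ * ⟪y u, y u⟫ with hVdef
  set W : ℝ → ℝ := fun u => ξ (ε u) * ⟪ε u, ε u⟫ with hWdef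
  have hg0 : ∀ u, (0:ℝ) ≤ g u := fun u => real_inner_self_nonneg
  have hgV : ∀ u, g u ≤ V u := by
    intro u
    have : (0:ℝ) ≤ κ * ⟪y u, y u⟫ := mul_nonneg hκ.le real_inner_self_nonneg
    simp only [hVdef, hgdef]; linarith
  have hV0 : ∀ u, (0:ℝ) ≤ V u := fun u => le_trans (hg0 u) (hgV u)
  -- derivative of V
  have hVd : ∀ s : ℝ, 0 < s → HasDerivAt V (-2 * W s) s := by
    intro s hs
    have hε' := hdyn s hs.le
    have hy' := hyd s hs
    have h1 := hε'.inner ℝ hε'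
    have h2 := (hy'.inner ℝ hy').const_mul κ
    have h3 := h1.add h2
    convert h3 using 1
    · rfl
    · rfl
    · rfl
    simp only [inner_sub_right, inner_sub_left, inner_smul_right, inner_smul_left,
      inner_neg_right, inner_neg_left, RCLike.conj_to_real, hWdef]
    rw [real_inner_comm (y s) (ε s)]
    ring
  -- continuity facts on [0, T]
  have hgc : ContinuousOn g (Set.Ici 0) := hεc.inner hεc
  have hWc : ContinuousOn W (Set.Ici 0) := (hξc.comp_continuousOn hεc).mul hgc
  have hgint : ∀ {u v : ℝ}, 0 ≤ u → 0 ≤ v → IntervalIntegrable g volume u v := fun hu hv =>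
    (hgc.mono (hsub hu hv)).intervalIntegrable
  have hWint : ∀ {t : ℝ}, 0 ≤ t → IntervalIntegrable W volume 0 t := fun ht =>
    (hWc.mono (hsub le_rfl ht)).intervalIntegrable
  -- FTC identity for V
  have hkey : ∀ t : ℝ, 0 ≤ t → (∫ s in (0:ℝ)..t, (-2 * W s)) = V t - V 0 := by
    intro t ht
    refine integral_eq_sub_of_hasDeriv_right_of_le ht ?_ (fun x hx => (hVd x hx.1).hasDerivWithinAt) ?_
    · have hεc' : ContinuousOn ε (Set.Icc 0 t) := hεc.mono Set.Icc_subset_Ici_self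
      exact (hεc'.inner hεc').add (continuousOn_const.mul ((hyc ht).inner (hyc ht)))
    · exact ((continuousOn_const.mul (hWc.mono (hsub le_rfl ht))).intervalIntegrable)
  -- bound on ∫ g and on V
  have hWg : ∀ u, 0 ≤ u → a * g u ≤ W u := by
    intro u hu
    exact mul_le_mul_of_nonneg_right (hξa (ε u)) (hg0 u)
  have hFbound : ∀ t : ℝ, 0 ≤ t → a * ∫ s in (0:ℝ)..t, g s ≤ V 0 := by
    intro t ht
    have h1 : (∫ s in (0:ℝ)..t, a * g s) ≤ ∫ s in (0:ℝ)..t, W s := by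
      refine integral_mono_on ht ((hgint le_rfl ht).const_mul a) (hWint ht) ?_
      intro x hx; exact hWg x hx.1
    have h2 : (∫ s in (0:ℝ)..t, (-2 * W s)) = -2 * ∫ s in (0:ℝ)..t, W s := by
      simpa using intervalIntegral.integral_const_mul (-2) W
    have h3 := hkey t ht
    rw [h2] at h3
    have h4 : (∫ s in (0:ℝ)..t, a * g s) = a * ∫ s in (0:ℝ)..t, g s := by
      simpa using intervalIntegral.integral_const_mul a g
    have h5 := hV0 t
    nlinarith [h1, h3, h4, h5, hV0 0]
  have hVle : ∀ t : ℝ, 0 ≤ t → V t ≤ V 0 := by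
    intro t ht
    have h3 := hkey t ht
    have h2 : (∫ s in (0:ℝ)..t, (-2 * W s)) = -2 * ∫ s in (0:ℝ)..t, W s := by
      simpa using intervalIntegral.integral_const_mul (-2) W
    rw [h2] at h3
    have h1 : (0:ℝ) ≤ ∫ s in (0:ℝ)..t, W s := by
      refine intervalIntegral.integral_nonneg ht ?_
      intro u hu
      exact le_trans (mul_nonneg ha.le (hg0 u)) (hWg u hu.1)
    nlinarith
  -- uniform bounds on ε and y
  set R : ℝ := Real.sqrt (V 0) with hRdef
  set Ry : ℝ := Real.sqrt (V 0 / κ) with hRydef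
  have hεR : ∀ t : ℝ, 0 ≤ t → ‖ε t‖ ≤ R := by
    intro t ht
    have h1 : ‖ε t‖ ^ 2 ≤ V 0 := by
      rw [← real_inner_self_eq_norm_sq]
      exact le_trans (hgV t) (hVle t ht)
    have := Real.sqrt_le_sqrt h1
    rwa [Real.sqrt_sq (norm_nonneg _)] at this
  have hyR : ∀ t : ℝ, 0 ≤ t → ‖y t‖ ≤ Ry := by
    intro t ht
    have h1 : ‖y t‖ ^ 2 ≤ V 0 / κ := by
      rw [← real_inner_self_eq_norm_sq]
      have h2 : κ * ⟪y t, y t⟫ ≤ V 0 := by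
        have := hVle t ht
        have := real_inner_self_nonneg (F := EuclideanSpace ℝ (Fin n)) (x := ε t)
        simp only [hVdef] at *
        linarith
      rw [le_div_iff₀ hκ]; linarith [h2]
    have := Real.sqrt_le_sqrt h1
    rwa [Real.sqrt_sq (norm_nonneg _)] at this
  -- bound for ξ on the ball of radius R
  obtain ⟨M, hM⟩ := (isCompact_closedBall (0:EuclideanSpace ℝ (Fin n)) R).exists_bound_of_continuousOn
    hξc.continuousOn
  set M' : ℝ := max M 0 with hM'def
  have hξM : ∀ t : ℝ, 0 ≤ t → |ξ (ε t)| ≤ M' := by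
    intro t ht
    have : ε t ∈ Metric.closedBall (0:EuclideanSpace ℝ (Fin n)) R := by
      simpa [Metric.mem_closedBall, dist_zero_right] using hεR t ht
    exact le_trans (hM _ this) (le_max_left _ _)
  -- Lipschitz bound for g on (0, ∞)
  set L : ℝ := 2 * R * (M' * R + κ * Ry) + 1 with hLdef
  have hR0 : 0 ≤ R := Real.sqrt_nonneg _
  have hRy0 : 0 ≤ Ry := Real.sqrt_nonneg _
  have hM'0 : 0 ≤ M' := le_max_right _ _
  have hL0 : 0 < L := by
    have : 0 ≤ 2 * R * (M' * R + κ * Ry) :=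
      mul_nonneg (by linarith) (by nlinarith)
    linarith
  set G : ℝ → ℝ := fun t => 2 * ⟪ε t, -(ξ (ε t)) • ε t - κ • y t⟫ with hGdef
  have hgd : ∀ t : ℝ, 0 < t → HasDerivAt g (G t) t := by
    intro t ht
    have h1 := (hdyn t ht.le).inner ℝ (hdyn t ht.le)
    convert h1 using 1
    · rfl
    · rfl
    rw [real_inner_comm (ε t) (-(ξ (ε t)) • ε t - κ • y t)]
    simp only [hGdef]; ring
  have hGL : ∀ t : ℝ, 0 < t → ‖G t‖ ≤ L := by
    intro t ht
    have hD : ‖-(ξ (ε t)) • ε t - κ • y t‖ ≤ M' * R + κ * Ry := by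
      refine le_trans (norm_sub_le _ _) ?_
      have h1 : ‖-(ξ (ε t)) • ε t‖ ≤ M' * R := by
        rw [norm_smul]
        have : ‖-(ξ (ε t))‖ ≤ M' := by rw [norm_neg, Real.norm_eq_abs]; exact hξM t ht.le
        exact mul_le_mul this (hεR t ht.le) (norm_nonneg _) hM'0
      have h2 : ‖κ • y t‖ ≤ κ * Ry := by
        rw [norm_smul, Real.norm_eq_abs, abs_of_pos hκ]
        exact mul_le_mul_of_nonneg_left (hyR t ht.le) hκ.le
      linarith
    have h3 : ‖G t‖ ≤ 2 * (‖ε t‖ * ‖-(ξ (ε t)) • ε t - κ • y t‖) := by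
      rw [hGdef]
      simp only [norm_mul, Real.norm_eq_abs]
      rw [abs_of_nonneg (by norm_num : (0:ℝ) ≤ 2)]
      exact mul_le_mul_of_nonneg_left (abs_real_inner_le_norm _ _) (by norm_num)
    have h4 : ‖ε t‖ * ‖-(ξ (ε t)) • ε t - κ • y t‖ ≤ R * (M' * R + κ * Ry) := by
      exact mul_le_mul (hεR t ht.le) hD (norm_nonneg _) hR0
    rw [hLdef]; nlinarith
  have hLip : ∀ u v : ℝ, 0 < u → 0 < v → ‖g v - g u‖ ≤ L * ‖v - u‖ := by
    intro u v hu hv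
    exact Convex.norm_image_sub_le_of_norm_hasDerivWithin_le
      (fun x hx => (hgd x hx).hasDerivWithinAt) (fun x hx => hGL x hx)
      (convex_Ioi 0) hu hv
  -- the primitive F of g converges
  set F : ℝ → ℝ := fun t => ∫ s in (0:ℝ)..t, g s with hFdef
  have hFadd : ∀ u v : ℝ, 0 ≤ u → u ≤ v → F v = F u + ∫ s in u..v, g s := by
    intro u v hu huv
    rw [hFdef]
    have := intervalIntegral.integral_add_adjacent_intervals (hgint le_rfl hu)
      (hgint hu (hu.trans huv))
    linarith [this]
  have hFmono : ∀ u v : ℝ, 0 ≤ u → u ≤ v → F u ≤ F v := by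
    intro u v hu huv
    rw [hFadd u v hu huv]
    have : (0:ℝ) ≤ ∫ s in u..v, g s :=
      intervalIntegral.integral_nonneg huv fun s _ => hg0 s
    linarith
  set F' : ℝ → ℝ := fun t => F (max t 0) with hF'def
  have hF'mono : Monotone F' := fun u v huv =>
    hFmono _ _ (le_max_right _ _) (max_le_max huv le_rfl)
  have hF'bdd : BddAbove (Set.range F') := by
    refine ⟨V 0 / a, ?_⟩
    rintro x ⟨t, rfl⟩
    have h1 := hFbound (max t 0) (le_max_right _ _)
    show F (max t 0) ≤ V 0 / a
    rw [le_div_iff₀ ha, mul_comm]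
    exact h1
  have hF'tend : Tendsto F' atTop (nhds (⨆ t, F' t)) := tendsto_atTop_ciSup hF'mono hF'bdd
  have hFF' : F' =ᶠ[atTop] F := by
    filter_upwards [eventually_ge_atTop (0:ℝ)] with t ht
    show F (max t 0) = F t
    rw [max_eq_left ht]
  have hFtend : Tendsto F atTop (nhds (⨆ t, F' t)) := hF'tend.congr' hFF'
  -- Barbalat argument: g → 0
  have hgtend : Tendsto g atTop (nhds 0) := by
    rw [tendsto_order]
    constructor
    · intro b hb
      filter_upwards with t
      exact lt_of_lt_of_le hb (hg0 t)
    · intro δ hδ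
      set r : ℝ := δ / (2 * L) with hrdef
      have hr0 : 0 < r := div_pos hδ (by linarith)
      have hLr : L * r = δ / 2 := by
        rw [hrdef]; field_simp
      have hshift : Tendsto (fun t : ℝ => t + r) atTop atTop :=
        tendsto_atTop_add_const_right atTop r tendsto_id
      have hdiff : Tendsto (fun t => F (t + r) - F t) atTop (nhds 0) := by
        have := (hFtend.comp hshift).sub hFtend
        simpa using this
      have hev : ∀ᶠ t : ℝ in atTop, F (t + r) - F t < r * (δ / 2) :=
        hdiff.eventually_lt_const (by positivity)
      filter_upwards [hev, eventually_ge_atTop (1:ℝ)] with t hFt ht1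
      have ht0 : (0:ℝ) < t := lt_of_lt_of_le one_pos ht1
      -- lower bound on the integral over [t, t+r]
      have hlow : r * (g t - δ / 2) ≤ F (t + r) - F t := by
        have heq : F (t + r) - F t = ∫ s in t..(t + r), g s := by
          rw [hFadd t (t + r) ht0.le (by linarith)]; ring
        rw [heq]
        have hconst : (∫ _ in t..(t + r), (g t - δ / 2)) = r * (g t - δ / 2) := by
          rw [intervalIntegral.integral_const]
          simp [smul_eq_mul]
        rw [← hconst]
        refine integral_mono_on (by linarith) intervalIntegrable_const
          (hgint ht0.le (by linarith)) ?_
        intro x hx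
        have hx0 : (0:ℝ) < x := lt_of_lt_of_le ht0 hx.1
        have := hLip t x ht0 hx0
        have hxt : |x - t| ≤ r := by
          rw [abs_of_nonneg (by linarith [hx.1])]
          linarith [hx.2]
        have h5 : |g x - g t| ≤ L * r := by
          rw [Real.norm_eq_abs, Real.norm_eq_abs] at this
          calc |g x - g t| ≤ L * |x - t| := this
            _ ≤ L * r := mul_le_mul_of_nonneg_left hxt (by linarith)
        have h6 : g t - g x ≤ L * r := by
          have := abs_le.1 h5
          linarith [this.1]
        rw [hLr] at h6
        linarith
      -- conclude g t < δ
      have : r * (g t - δ / 2) < r * (δ / 2) := lt_of_le_of_lt hlow hFt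
      have := (mul_lt_mul_iff_right₀ hr0).1 this
      linarith
  -- conclude ε → 0
  rw [tendsto_zero_iff_norm_tendsto_zero]
  have hsq : Tendsto (fun t => Real.sqrt (g t)) atTop (nhds 0) := by
    have := (Real.continuous_sqrt.tendsto 0).comp hgtend
    simpa [Function.comp_def] using this
  refine hsq.congr' ?_
  filter_upwards [eventually_ge_atTop (0:ℝ)] with t ht
  rw [hgdef]
  simp only [real_inner_self_eq_norm_sq]
  exact Real.sqrt_sq (norm_nonneg _)
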